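/- Let A_1, …, A_n be independent events in a probability space, and suppose that the probability x that none of the A_i occurs is nonzero. Then the probability that exactly one of the A_i occurs is at least −x·ln x. -/

import Mathlib

open MeasureTheory ProbabilityTheory

/-- If `A 1, …, A n` are independent events and the probability `x` that
none of them occurs is nonzero, then the probability that exactly one of them occurs is
at least `-x * log x`. -/
theorem prob_exactly_one_ge_neg_mul_log {Ω : Type*} [MeasurableSpace Ω]
    (μ : Measure Ω) [IsProbabilityMeasure μ] (n : ℕ) (A : Fin n → Set Ω)
    (hAmeas : ∀ i, MeasurableSet (A i)) (hind : iIndepSet A μ)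
    (x : ℝ) (hx : x = (μ (⋂ i, (A i)ᶜ)).toReal) (hx0 : x ≠ 0) :
    -x * Real.log x ≤ (μ {ω | ∃! i, ω ∈ A i}).toReal := by
  have hind' : iIndep (fun i ↦ MeasurableSpace.generateFrom {A i}) μ :=
    (iIndepSet_iff_iIndep A μ).1 hind
  have hgen : ∀ i, MeasurableSet[MeasurableSpace.generateFrom {A i}] (A i) :=
    fun i ↦ MeasurableSpace.measurableSet_generateFrom rfl
  -- real probabilities
  set q : Fin n → ℝ := fun i ↦ (μ (A i)).toReal with hq
  set c : Fin n → ℝ := fun i ↦ (μ (A i)ᶜ).toReal with hc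
  -- x as a product
  have hxprod : x = ∏ i, c i := by
    rw [hx, hind'.meas_iInter (fun i ↦ (hgen i).compl)]
    rw [ENNReal.toReal_prod]
  have hcnonneg : ∀ i, 0 ≤ c i := fun i ↦ ENNReal.toReal_nonneg
  have hcpos : ∀ i, 0 < c i := by
    intro i
    rcases (hcnonneg i).lt_or_eq with h | h
    · exact h
    · exact absurd (by rw [hxprod]; exact Finset.prod_eq_zero (Finset.mem_univ i) h.symm) hx0
  have hci : ∀ i, c i = 1 - q i := by
    intro i
    rw [hc, hq]
    simp only
    rw [measure_compl (hAmeas i) (measure_ne_top μ _), measure_univ,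
      ENNReal.toReal_sub_of_le (prob_le_one) (by simp)]
    simp
  -- the exactly-one event
  have hset : {ω | ∃! i, ω ∈ A i} = ⋃ i, (A i ∩ ⋂ j ∈ ({i}ᶜ : Set (Fin n)), (A j)ᶜ) := by
    ext ω
    simp only [Set.mem_setOf_eq, Set.mem_iUnion, Set.mem_inter_iff, Set.mem_iInter,
      Set.mem_compl_iff, Set.mem_singleton_iff, ExistsUnique]
    constructor
    · rintro ⟨i, hi, huniq⟩
      exact ⟨i, hi, fun j hj hAj ↦ hj (huniq j hAj)⟩
    · rintro ⟨i, hi, hothers⟩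
      exact ⟨i, hi, fun j hAj ↦ by by_contra hji; exact hothers j hji hAj⟩
  have hEmeas : ∀ i : Fin n, MeasurableSet (A i ∩ ⋂ j ∈ ({i}ᶜ : Set (Fin n)), (A j)ᶜ) := by
    intro i
    exact (hAmeas i).inter (MeasurableSet.biInter (Set.to_countable _)
      (fun j _ ↦ (hAmeas j).compl))
  have hdisj : Pairwise (Function.onFun Disjoint
      (fun i ↦ A i ∩ ⋂ j ∈ ({i}ᶜ : Set (Fin n)), (A j)ᶜ)) := by
    intro i j hij
    rw [Function.onFun, Set.disjoint_left]
    rintro ω ⟨hωi, hωrest⟩ ⟨hωj, -⟩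
    exact (Set.mem_iInter₂.1 hωrest j (Ne.symm hij)) hωj
  -- measure of each piece
  have hEi : ∀ i : Fin n, (μ (A i ∩ ⋂ j ∈ ({i}ᶜ : Set (Fin n)), (A j)ᶜ)).toReal
      = q i * ∏ j ∈ Finset.univ.erase i, c j := by
    intro i
    have : (A i ∩ ⋂ j ∈ ({i}ᶜ : Set (Fin n)), (A j)ᶜ)
        = ⋂ j, (fun j ↦ if j = i then A i else (A j)ᶜ) j := by
      ext ω
      simp only [Set.mem_inter_iff, Set.mem_iInter, Set.mem_compl_iff,
        Set.mem_singleton_iff]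
      constructor
      · rintro ⟨h1, h2⟩ j
        by_cases hji : j = i
        · simp [hji, h1]
        · simp [hji]; exact h2 j hji
      · intro h
        refine ⟨by simpa using h i, fun j hji ↦ by simpa [hji] using h j⟩
    rw [this, hind'.meas_iInter (fun j ↦ ?_), ENNReal.toReal_prod]
    · rw [← Finset.prod_erase_mul _ _ (Finset.mem_univ i)]
      simp only [if_pos rfl]
      rw [mul_comm]
      congr 1
      exact Finset.prod_congr rfl (fun j hj ↦ by
        rw [if_neg (Finset.ne_of_mem_erase hj)])
    · by_cases hji : j = i
      · subst hji; simpa using hgen j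
      · simpa [hji] using (hgen j).compl
  -- measure of the union
  have hP : (μ {ω | ∃! i, ω ∈ A i}).toReal
      = ∑ i, q i * ∏ j ∈ Finset.univ.erase i, c j := by
    rw [hset, measure_iUnion hdisj hEmeas, ENNReal.tsum_toReal_eq
      (fun i ↦ measure_ne_top μ _), tsum_fintype]
    exact Finset.sum_congr rfl (fun i _ ↦ hEi i)
  rw [hP]
  -- arithmetic
  have hxpos : 0 < x := by
    rw [hxprod]; exact Finset.prod_pos (fun i _ ↦ hcpos i)
  have hlog : Real.log x = ∑ i, Real.log (c i) := by
    rw [hxprod, Real.log_prod (s := Finset.univ) (f := c) (fun i _ ↦ (hcpos i).ne')]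
  have key : ∀ i : Fin n, x * (-Real.log (c i)) ≤ q i * ∏ j ∈ Finset.univ.erase i, c j := by
    intro i
    have hxeq : x = c i * ∏ j ∈ Finset.univ.erase i, c j := by
      rw [hxprod, ← Finset.prod_erase_mul _ _ (Finset.mem_univ i), mul_comm]
    have hbound : -Real.log (c i) ≤ q i / c i := by
      have := Real.log_le_sub_one_of_pos (one_div_pos.2 (hcpos i))
      rw [Real.log_div one_ne_zero (hcpos i).ne', Real.log_one, zero_sub] at this
      have hqc : q i = 1 - c i := by rw [hci i]; ring
      rw [hqc]
      calc -Real.log (c i) ≤ 1 / c i - 1 := this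
        _ = (1 - c i) / c i := by rw [sub_div, div_self (hcpos i).ne']
    calc x * (-Real.log (c i)) ≤ x * (q i / c i) := by
          apply mul_le_mul_of_nonneg_left hbound hxpos.le
      _ = q i * (x / c i) := by ring
      _ = q i * ∏ j ∈ Finset.univ.erase i, c j := by
          rw [hxeq, mul_comm (c i), mul_div_assoc, div_self (hcpos i).ne', mul_one]
  calc -x * Real.log x = ∑ i, x * (-Real.log (c i)) := by
        rw [hlog, neg_mul, Finset.mul_sum, ← Finset.sum_neg_distrib]; simp [mul_neg]
    _ ≤ ∑ i, q i * ∏ j ∈ Finset.univ.erase i, c j :=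
        Finset.sum_le_sum (fun i _ ↦ key i)
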